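/- Let K be a field of characteristic zero, let η ∈ K be nonzero with η ≠ 1, and let A = A_η = A(1+η, −η, 1) with α = 1+η. Set ε = (α−2)⁻¹, φ = −2(α−2)⁻¹ and w = −ud + du + ε in A. Then for all n ≥ 1, d·u^{2n} = u^{2n}·d + nφ·u^{2n−1} + α·(Σ_{i=0}^{n−1} η^{−2i−1})·w·u^{2n−1}, and for all n ≥ 0, d·u^{2n+1} = u^{2n+1}·d + u^{2n}·w + (nφ − ε)·u^{2n} + α·(Σ_{i=0}^{n−1} η^{−1−2i})·w·u^{2n}. -/

import Mathlib

universe u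

noncomputable section

/-- The defining relations `d²u = α·dud + β·ud² + γ·d` and `du² = α·udu + β·u²d + γ·u`
of the down-up algebra `A(α,β,γ)`, as a relation on the free algebra on two generators
(`0 ↦ d`, `1 ↦ u`). -/
def duRel (K : Type u) [Field K] (α β γ : K) :
    FreeAlgebra K (Fin 2) → FreeAlgebra K (Fin 2) → Prop := fun X Y =>
  (X = FreeAlgebra.ι K (0 : Fin 2) * FreeAlgebra.ι K (0 : Fin 2) * FreeAlgebra.ι K (1 : Fin 2) ∧
   Y = α • (FreeAlgebra.ι K (0 : Fin 2) * FreeAlgebra.ι K (1 : Fin 2) * FreeAlgebra.ι K (0 : Fin 2)) +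
       β • (FreeAlgebra.ι K (1 : Fin 2) * FreeAlgebra.ι K (0 : Fin 2) * FreeAlgebra.ι K (0 : Fin 2)) +
       γ • FreeAlgebra.ι K (0 : Fin 2)) ∨
  (X = FreeAlgebra.ι K (0 : Fin 2) * FreeAlgebra.ι K (1 : Fin 2) * FreeAlgebra.ι K (1 : Fin 2) ∧
   Y = α • (FreeAlgebra.ι K (1 : Fin 2) * FreeAlgebra.ι K (0 : Fin 2) * FreeAlgebra.ι K (1 : Fin 2)) +
       β • (FreeAlgebra.ι K (1 : Fin 2) * FreeAlgebra.ι K (1 : Fin 2) * FreeAlgebra.ι K (0 : Fin 2)) +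
       γ • FreeAlgebra.ι K (1 : Fin 2))

/-- The down-up algebra `A(α,β,γ)`. -/
abbrev DownUp (K : Type u) [Field K] (α β γ : K) := RingQuot (duRel K α β γ)

/-- The generator `d` of the down-up algebra. -/
def duD (K : Type u) [Field K] (α β γ : K) : DownUp K α β γ :=
  RingQuot.mkAlgHom K (duRel K α β γ) (FreeAlgebra.ι K (0 : Fin 2))

/-- The generator `u` of the down-up algebra. -/
def duU (K : Type u) [Field K] (α β γ : K) : DownUp K α β γ :=
  RingQuot.mkAlgHom K (duRel K α β γ) (FreeAlgebra.ι K (1 : Fin 2))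

variable {K : Type u} [Field K]

lemma myP1 (η : K) (n : ℕ) :
    ∑ k ∈ Finset.range (2*n), η^k = (1+η) * ∑ j ∈ Finset.range n, η^(2*j) := by
  induction n with
  | zero => simp
  | succ m ih =>
    rw [Nat.mul_succ, Finset.sum_range_succ, Finset.sum_range_succ, Finset.sum_range_succ, ih]
    ring

lemma myL1 (η : K) (hη0 : η ≠ 0) (n : ℕ) :
    ∑ i ∈ Finset.range n, η⁻¹^(2*i+1) =
      η⁻¹^(2*n) * (η * ∑ j ∈ Finset.range n, η^(2*j)) := by
  induction n with
  | zero => simp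
  | succ m ih =>
    rw [Finset.sum_range_succ' (fun i => η⁻¹^(2*i+1)) m,
        Finset.sum_range_succ (fun j => η^(2*j)) m]
    have hs : ∑ i ∈ Finset.range m, η⁻¹^(2*(i+1)+1)
        = η⁻¹^2 * ∑ i ∈ Finset.range m, η⁻¹^(2*i+1) := by
      rw [Finset.mul_sum]
      exact Finset.sum_congr rfl fun i _ => by ring
    rw [hs, ih]
    simp only [inv_pow]
    field_simp
    ring

lemma keyA (η : K) (hη0 : η ≠ 0) (m : ℕ) :
    ∑ k ∈ Finset.range (2*m+1+1), η^k =
      (1+η) * (∑ i ∈ Finset.range (m+1), η⁻¹^(2*i+1)) * η^(2*m+1) := by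
  have h2 : (2*m+1+1) = 2*(m+1) := by ring
  rw [h2, myP1, myL1 η hη0]
  simp only [inv_pow]
  field_simp
  ring

lemma keyB (η : K) (hη0 : η ≠ 0) (n : ℕ) :
    ∑ k ∈ Finset.range (2*n+1), η^k =
      1 + (1+η) * (∑ i ∈ Finset.range n, η⁻¹^(1+2*i)) * η^(2*n) := by
  have h0 : ∑ i ∈ Finset.range n, η⁻¹^(1+2*i) = ∑ i ∈ Finset.range n, η⁻¹^(2*i+1) :=
    Finset.sum_congr rfl fun i _ => by rw [Nat.add_comm]
  rw [h0, Finset.sum_range_succ', myL1 η hη0]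
  have h1 : ∑ k ∈ Finset.range (2*n), η^(k+1) = η * ∑ k ∈ Finset.range (2*n), η^k := by
    rw [Finset.mul_sum]; exact Finset.sum_congr rfl fun k _ => by ring
  rw [h1, myP1]
  simp only [inv_pow]
  field_simp
  ring

/-- Lemma 4.4: in `A_η = A(1+η, −η, 1)` with `α = 1+η`, `ε = (α−2)⁻¹`,
`φ = −2(α−2)⁻¹` and `w = −ud + du + ε`, for all `n ≥ 1`,
`d·u^{2n} = u^{2n}·d + nφ·u^{2n−1} + α·(Σ_{i=0}^{n−1} η^{−2i−1})·w·u^{2n−1}`, and for all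
`n ≥ 0`,
`d·u^{2n+1} = u^{2n+1}·d + u^{2n}·w + (nφ − ε)·u^{2n} + α·(Σ_{i=0}^{n−1} η^{−1−2i})·w·u^{2n}`. -/
theorem downUp_du_power_formulas {K : Type u} [Field K] [CharZero K]
    (η : K) (hη0 : η ≠ 0) (hη1 : η ≠ 1) :
    (∀ n : ℕ, 1 ≤ n →
      duD K (1 + η) (-η) 1 * (duU K (1 + η) (-η) 1) ^ (2 * n) =
        (duU K (1 + η) (-η) 1) ^ (2 * n) * duD K (1 + η) (-η) 1 +
        ((n : K) * (-2 * ((1 + η) - 2)⁻¹)) • (duU K (1 + η) (-η) 1) ^ (2 * n - 1) +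
        ((1 + η) * ∑ i ∈ Finset.range n, η⁻¹ ^ (2 * i + 1)) •
          ((-(duU K (1 + η) (-η) 1 * duD K (1 + η) (-η) 1) +
              duD K (1 + η) (-η) 1 * duU K (1 + η) (-η) 1 +
              algebraMap K (DownUp K (1 + η) (-η) 1) (((1 + η) - 2)⁻¹)) *
            (duU K (1 + η) (-η) 1) ^ (2 * n - 1))) ∧
    (∀ n : ℕ,
      duD K (1 + η) (-η) 1 * (duU K (1 + η) (-η) 1) ^ (2 * n + 1) =
        (duU K (1 + η) (-η) 1) ^ (2 * n + 1) * duD K (1 + η) (-η) 1 +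
        (duU K (1 + η) (-η) 1) ^ (2 * n) *
          (-(duU K (1 + η) (-η) 1 * duD K (1 + η) (-η) 1) +
            duD K (1 + η) (-η) 1 * duU K (1 + η) (-η) 1 +
            algebraMap K (DownUp K (1 + η) (-η) 1) (((1 + η) - 2)⁻¹)) +
        ((n : K) * (-2 * ((1 + η) - 2)⁻¹) - ((1 + η) - 2)⁻¹) • (duU K (1 + η) (-η) 1) ^ (2 * n) +
        ((1 + η) * ∑ i ∈ Finset.range n, η⁻¹ ^ (1 + 2 * i)) •
          ((-(duU K (1 + η) (-η) 1 * duD K (1 + η) (-η) 1) +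
              duD K (1 + η) (-η) 1 * duU K (1 + η) (-η) 1 +
              algebraMap K (DownUp K (1 + η) (-η) 1) (((1 + η) - 2)⁻¹)) *
            (duU K (1 + η) (-η) 1) ^ (2 * n))) := by
  have hne : (1 + η) - 2 ≠ 0 := fun h => hη1 (by linear_combination h)
  set d := duD K (1 + η) (-η) 1 with hd
  set u := duU K (1 + η) (-η) 1 with hu
  set ε : K := ((1 + η) - 2)⁻¹ with hε
  set w : DownUp K (1+η) (-η) 1 :=
    -(u*d) + d*u + algebraMap K (DownUp K (1 + η) (-η) 1) ε with hw
  have hX : duRel K (1+η) (-η) 1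
      (FreeAlgebra.ι K (0 : Fin 2) * FreeAlgebra.ι K (1 : Fin 2) * FreeAlgebra.ι K (1 : Fin 2))
      ((1+η) • (FreeAlgebra.ι K (1 : Fin 2) * FreeAlgebra.ι K (0 : Fin 2) * FreeAlgebra.ι K (1 : Fin 2)) +
       (-η) • (FreeAlgebra.ι K (1 : Fin 2) * FreeAlgebra.ι K (1 : Fin 2) * FreeAlgebra.ι K (0 : Fin 2)) +
       (1:K) • FreeAlgebra.ι K (1 : Fin 2)) := Or.inr ⟨rfl, rfl⟩
  have hrel : d * (u * u) = (1+η) • (u*(d*u)) + (-η) • (u*(u*d)) + (1:K) • u := by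
    have h := RingQuot.mkAlgHom_rel K hX
    simp only [map_mul, map_add, map_smul] at h
    simpa only [hd, hu, duD, duU, mul_assoc] using h
  have hns : ∀ x : DownUp K (1+η) (-η) 1, -x = (-1:K) • x :=
    fun x => (neg_one_smul K x).symm
  have hwu : w * u = η • (u * w) := by
    rw [hw, Algebra.algebraMap_eq_smul_one]
    simp only [hns, add_mul, mul_add, smul_mul_assoc, mul_smul_comm, smul_add,
      smul_smul, one_mul, mul_one, mul_assoc]
    rw [hrel, hε]
    match_scalars <;> (field_simp [hε, hne]; try ring)
  have hwun : ∀ m : ℕ, w * u^m = (η^m) • (u^m * w) := by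
    intro m
    induction m with
    | zero => simp
    | succ m ih =>
      rw [pow_succ' u m, ← mul_assoc, hwu, smul_mul_assoc, mul_assoc, ih,
        mul_smul_comm, smul_smul, ← mul_assoc, ← pow_succ' u m, ← pow_succ' η m]
  have hdu : d * u = u * d + w + (-ε) • 1 := by
    rw [hw, Algebra.algebraMap_eq_smul_one]
    match_scalars <;> ring
  have hmain : ∀ n : ℕ, d * u^(n+1) =
      u^(n+1) * d + (∑ k ∈ Finset.range (n+1), η^k) • (u^n * w) +
        (-((n:K)+1) * ε) • u^n := by
    intro n
    induction n with
    | zero =>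
      simpa using hdu
    | succ n ih =>
      rw [pow_succ' u (n+1), ← mul_assoc, hdu]
      simp only [add_mul, smul_mul_assoc, one_mul, mul_assoc, ih, hwun (n+1)]
      simp only [mul_add, mul_smul_comm, ← mul_assoc, ← pow_succ' u]
      rw [Finset.sum_range_succ _ (n+1)]
      match_scalars <;> (push_cast; ring)
  constructor
  · intro n hn
    obtain ⟨m, rfl⟩ : ∃ m, n = m + 1 := ⟨n-1, (Nat.succ_pred_eq_of_pos hn).symm⟩
    rw [show 2*(m+1)-1 = 2*m+1 from by omega, show 2*(m+1) = 2*m+1+1 from by ring]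
    rw [hmain (2*m+1), hwun (2*m+1)]
    match_scalars
    · push_cast; ring
    · linear_combination keyA η hη0 m
    · push_cast; ring
  · intro n
    rw [hmain (2*n), hwun (2*n)]
    match_scalars
    · push_cast; ring
    · linear_combination keyB η hη0 n
    · push_cast; ring


end
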